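/- For the INMA(q1,q2) random field and any lag (k,l) with 0 ≤ k ≤ q1 and 0 ≤ l ≤ q2, the autocovariance function satisfies γ(k,l) := Cov(X_{s,t}, X_{s−k,t−l}) = (σ_ε² − μ_ε) · ∑_{i=k}^{q1} ∑_{j=l}^{q2} β_{i,j} β_{i−k,j−l} + μ_ε · ∑_{i=k}^{q1} ∑_{j=l}^{q2} P(Z_{s−i,t−j;1}^{(i,j)} = Z_{s−i,t−j;1}^{(i−k,j−l)} = 1). (Theorem 1(ii).) -/

import Mathlib

open MeasureTheory ProbabilityTheory Finset
open scoped ENNReal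

set_option maxHeartbeats 2000000

noncomputable section INMAaux


variable {Ω : Type*} [MeasurableSpace Ω]

def Gfam (Z : ℤ × ℤ → ℕ → Ω → ℕ × ℕ → ℕ) : Ω → ((ℤ × ℤ) × ℕ → ℕ × ℕ → ℕ) :=
  fun ω pr => Z pr.1 pr.2 ω

def Ssum (p : ℤ × ℤ) (ij : ℕ × ℕ) (n : ℕ) (z : (ℤ × ℤ) × ℕ → ℕ × ℕ → ℕ) : ℝ≥0∞ :=
  ∑ r ∈ Finset.range n, (z (p, r) ij : ℝ≥0∞)

lemma measurable_Ssum (p : ℤ × ℤ) (ij : ℕ × ℕ) (n : ℕ) : Measurable (Ssum p ij n) :=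
  Finset.measurable_sum _ fun r _ =>
    measurable_from_top.comp ((measurable_pi_apply ij).comp (measurable_pi_apply (p, r)))

lemma measurable_Gfam {Z : ℤ × ℤ → ℕ → Ω → ℕ × ℕ → ℕ} (hZmeas : ∀ p r, Measurable (Z p r)) :
    Measurable (Gfam Z) :=
  measurable_pi_lambda _ fun pr => hZmeas pr.1 pr.2

lemma measurable_T {ε : ℤ × ℤ → Ω → ℕ} {Z : ℤ × ℤ → ℕ → Ω → ℕ × ℕ → ℕ}
    (hεmeas : ∀ p, Measurable (ε p)) (hZmeas : ∀ p r, Measurable (Z p r))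
    (p p' : ℤ × ℤ) (ij : ℕ × ℕ) :
    Measurable (fun ω => Ssum p ij (ε p' ω) (Gfam Z ω)) := by
  have h1 : Measurable (fun q : ((ℤ × ℤ) × ℕ → ℕ × ℕ → ℕ) × ℕ => Ssum p ij q.2 q.1) :=
    measurable_from_prod_countable_left fun n => measurable_Ssum p ij n
  exact h1.comp ((measurable_Gfam hZmeas).prodMk (hεmeas p'))

/-- copied from h1 -/
lemma lintegral_nat_le_one (P : Measure Ω)
    (f : Ω → ℕ) (hf : Measurable f) (h01 : ∀ ω, f ω ≤ 1) :
    ∫⁻ ω, (f ω : ℝ≥0∞) ∂P = P {ω | f ω = 1} := by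
  have hset : MeasurableSet {ω | f ω = 1} := hf (measurableSet_singleton 1)
  have heq : (fun ω => (f ω : ℝ≥0∞)) = Set.indicator {ω | f ω = 1} (fun _ => 1) := by
    funext ω
    by_cases h : f ω = 1
    · simp [Set.indicator_of_mem, h]
    · have h2 := h01 ω
      have h0 : f ω = 0 := by omega
      simp [Set.indicator_of_notMem, h, h0]
  rw [heq]
  show ∫⁻ ω, Set.indicator {ω | f ω = 1} (fun _ => (1:ℝ≥0∞)) ω ∂P = _
  rw [lintegral_indicator hset]
  simp

variable (P : Measure Ω) [IsProbabilityMeasure P]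
variable {Z : ℤ × ℤ → ℕ → Ω → ℕ × ℕ → ℕ}

lemma measurable_Zev (hZmeas : ∀ p r, Measurable (Z p r)) (p : ℤ × ℤ) (r : ℕ) (ij : ℕ × ℕ) :
    Measurable (fun ω => Z p r ω ij) :=
  (measurable_pi_apply ij).comp (hZmeas p r)

lemma lintegral_Zev (hZmeas : ∀ p r, Measurable (Z p r)) (hZ01 : ∀ p r ω ij, Z p r ω ij ≤ 1)
    (p : ℤ × ℤ) (r : ℕ) (ij : ℕ × ℕ) :
    ∫⁻ ω, (Z p r ω ij : ℝ≥0∞) ∂P = P {ω | Z p r ω ij = 1} :=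
  lintegral_nat_le_one P _ (measurable_Zev hZmeas p r ij) (fun ω => hZ01 p r ω ij)

lemma lintegral_Ssum_const (hZmeas : ∀ p r, Measurable (Z p r))
    (hZ01 : ∀ p r ω ij, Z p r ω ij ≤ 1)
    (p : ℤ × ℤ) (ij : ℕ × ℕ) (b : ℝ≥0∞) (hb : ∀ r, P {ω | Z p r ω ij = 1} = b) (n : ℕ) :
    ∫⁻ ω, Ssum p ij n (Gfam Z ω) ∂P = n * b := by
  have : ∀ ω, Ssum p ij n (Gfam Z ω) = ∑ r ∈ Finset.range n, (Z p r ω ij : ℝ≥0∞) := fun ω => rfl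
  simp only [this]
  rw [lintegral_finset_sum (f := fun (r : ℕ) ω => ((Z p r ω ij : ℕ) : ℝ≥0∞)) _
    (fun r _ => measurable_from_top.comp (measurable_Zev hZmeas p r ij))]
  have : ∀ r ∈ Finset.range n, ∫⁻ ω, (Z p r ω ij : ℝ≥0∞) ∂P = b := fun r _ => by
    rw [lintegral_Zev P hZmeas hZ01 p r ij, hb r]
  rw [Finset.sum_congr rfl this, Finset.sum_const, Finset.card_range, nsmul_eq_mul]


/-- Conditioning on an independent discrete random variable, lintegral version. -/
lemma lintegral_indep_discrete' {α E : Type*}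
    [MeasurableSpace α] [Countable α] [MeasurableSingletonClass α] [MeasurableSpace E]
    (N : Ω → α) (G : Ω → E) (hN : Measurable N) (hG : Measurable G)
    (hind : IndepFun N G P) (φ : α → E → ℝ≥0∞) (hφ : ∀ a, Measurable (φ a)) :
    ∫⁻ ω, φ (N ω) (G ω) ∂P = ∫⁻ ω, (fun a => ∫⁻ ω', φ a (G ω') ∂P) (N ω) ∂P := by
  have hψ : Measurable (fun q : E × α => φ q.2 q.1) :=
    measurable_from_prod_countable_left (fun a => hφ a)
  have huc : Measurable (Function.uncurry φ) := by
    have : Function.uncurry φ = (fun q : E × α => φ q.2 q.1) ∘ Prod.swap := rfl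
    rw [this]; exact hψ.comp measurable_swap
  have hmap : P.map (fun ω => (N ω, G ω)) = (P.map N).prod (P.map G) :=
    (indepFun_iff_map_prod_eq_prod_map_map hN.aemeasurable hG.aemeasurable).mp hind
  have h1 : ∫⁻ ω, φ (N ω) (G ω) ∂P
      = ∫⁻ z, Function.uncurry φ z ∂(P.map (fun ω => (N ω, G ω))) := by
    rw [lintegral_map huc (hN.prodMk hG)]; rfl
  rw [h1, hmap, lintegral_prod _ huc.aemeasurable]
  simp only [Function.uncurry_apply_pair]
  rw [lintegral_map (measurable_of_countable _) hN]
  refine lintegral_congr fun ω => ?_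
  rw [lintegral_map (hφ _) hG]

lemma key_mean {ε : ℤ × ℤ → Ω → ℕ} (hεmeas : ∀ p, Measurable (ε p))
    (hZmeas : ∀ p r, Measurable (Z p r)) (hZ01 : ∀ p r ω ij, Z p r ω ij ≤ 1)
    (hindep : IndepFun (fun ω p => ε p ω) (fun ω (pr : (ℤ × ℤ) × ℕ) => Z pr.1 pr.2 ω) P)
    (p : ℤ × ℤ) (ij : ℕ × ℕ) (b : ℝ≥0∞) (hb : ∀ r, P {ω | Z p r ω ij = 1} = b) :
    ∫⁻ ω, Ssum p ij (ε p ω) (Gfam Z ω) ∂P = b * ∫⁻ ω, (ε p ω : ℝ≥0∞) ∂P := by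
  have hN : Measurable (ε p) := hεmeas p
  have hG : Measurable (Gfam Z) := measurable_Gfam hZmeas
  have hind : IndepFun (ε p) (Gfam Z) P :=
    hindep.comp (measurable_pi_apply p) measurable_id
  rw [lintegral_indep_discrete' P (ε p) (Gfam Z) hN hG hind (Ssum p ij)
    (fun n => measurable_Ssum p ij n)]
  have hH : ∀ n : ℕ, ∫⁻ ω', Ssum p ij n (Gfam Z ω') ∂P = n * b :=
    lintegral_Ssum_const P hZmeas hZ01 p ij b hb
  calc ∫⁻ ω, (fun n => ∫⁻ ω', Ssum p ij n (Gfam Z ω') ∂P) (ε p ω) ∂P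
      = ∫⁻ ω, (ε p ω : ℝ≥0∞) * b ∂P := lintegral_congr fun ω => hH (ε p ω)
    _ = b * ∫⁻ ω, (ε p ω : ℝ≥0∞) ∂P := by
        rw [lintegral_mul_const (f := fun ω => ((ε p ω : ℕ) : ℝ≥0∞)) b (measurable_from_top.comp hN), mul_comm]


lemma lintegral_Ssum_mul_cross (hZmeas : ∀ p r, Measurable (Z p r))
    (hZ01 : ∀ p r ω ij, Z p r ω ij ≤ 1)
    (hZiid : iIndepFun (fun pr : (ℤ × ℤ) × ℕ => Z pr.1 pr.2) P)
    (p p' : ℤ × ℤ) (hpp' : p ≠ p') (ij i'j' : ℕ × ℕ) (b b' : ℝ≥0∞)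
    (hb : ∀ r, P {ω | Z p r ω ij = 1} = b) (hb' : ∀ r, P {ω | Z p' r ω i'j' = 1} = b')
    (n m : ℕ) :
    ∫⁻ ω, Ssum p ij n (Gfam Z ω) * Ssum p' i'j' m (Gfam Z ω) ∂P
      = ((n : ℝ≥0∞) * b) * ((m : ℝ≥0∞) * b') := by
  classical
  set S : Finset ((ℤ × ℤ) × ℕ) := {p} ×ˢ Finset.range n with hS
  set T : Finset ((ℤ × ℤ) × ℕ) := {p'} ×ˢ Finset.range m with hT
  have hdisj : Disjoint S T := by
    rw [Finset.disjoint_left]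
    rintro ⟨a, r⟩ haS haT
    simp only [hS, hT, Finset.mem_product, Finset.mem_singleton] at haS haT
    exact hpp' (haS.1 ▸ haT.1 ▸ rfl)
  have hfin := hZiid.indepFun_finset S T hdisj (fun i => hZmeas i.1 i.2)
  have humeas : ∀ (F : Finset ((ℤ × ℤ) × ℕ)) (kk : ℕ × ℕ),
      Measurable (fun v : (↥F → ℕ × ℕ → ℕ)  => ∑ x ∈ F.attach, (v x kk : ℝ≥0∞)) :=
    fun F kk => Finset.measurable_sum _ fun x _ =>
      measurable_from_top.comp ((measurable_pi_apply kk).comp (measurable_pi_apply x))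
  have hcomp := hfin.comp (humeas S ij) (humeas T i'j')
  have hsum : ∀ (q : ℤ × ℤ) (N : ℕ) (kk : ℕ × ℕ) (ω : Ω),
      (∑ x ∈ ({q} ×ˢ Finset.range N).attach, (Z x.1.1 x.1.2 ω kk : ℝ≥0∞))
        = Ssum q kk N (Gfam Z ω) := by
    intro q N kk ω
    have h := Finset.sum_attach ({q} ×ˢ Finset.range N) (fun y => (Z y.1 y.2 ω kk : ℝ≥0∞))
    rw [Finset.sum_product, Finset.sum_singleton] at h
    exact h
  have hind2 : IndepFun (fun ω => Ssum p ij n (Gfam Z ω))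
      (fun ω => Ssum p' i'j' m (Gfam Z ω)) P := by
    refine hcomp.congr (Filter.Eventually.of_forall fun ω => ?_)
      (Filter.Eventually.of_forall fun ω => ?_)
    · exact hsum p n ij ω
    · exact hsum p' m i'j' ω
  rw [lintegral_mul_eq_lintegral_mul_lintegral_of_indepFun''
    (f := fun ω => Ssum p ij n (Gfam Z ω)) (g := fun ω => Ssum p' i'j' m (Gfam Z ω))
    (measurable_Ssum p ij n |>.comp (measurable_Gfam hZmeas)).aemeasurable
    (measurable_Ssum p' i'j' m |>.comp (measurable_Gfam hZmeas)).aemeasurable hind2,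
    lintegral_Ssum_const P hZmeas hZ01 p ij b hb n,
    lintegral_Ssum_const P hZmeas hZ01 p' i'j' b' hb' m]

lemma key_cross {ε : ℤ × ℤ → Ω → ℕ} (hεmeas : ∀ p, Measurable (ε p))
    (hεiid : iIndepFun ε P)
    (hZmeas : ∀ p r, Measurable (Z p r)) (hZ01 : ∀ p r ω ij, Z p r ω ij ≤ 1)
    (hZiid : iIndepFun (fun pr : (ℤ × ℤ) × ℕ => Z pr.1 pr.2) P)
    (hindep : IndepFun (fun ω p => ε p ω) (fun ω (pr : (ℤ × ℤ) × ℕ) => Z pr.1 pr.2 ω) P)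
    (p p' : ℤ × ℤ) (hpp' : p ≠ p') (ij i'j' : ℕ × ℕ) (b b' : ℝ≥0∞)
    (hb : ∀ r, P {ω | Z p r ω ij = 1} = b) (hb' : ∀ r, P {ω | Z p' r ω i'j' = 1} = b') :
    ∫⁻ ω, Ssum p ij (ε p ω) (Gfam Z ω) * Ssum p' i'j' (ε p' ω) (Gfam Z ω) ∂P
      = (b * ∫⁻ ω, (ε p ω : ℝ≥0∞) ∂P) * (b' * ∫⁻ ω, (ε p' ω : ℝ≥0∞) ∂P) := by
  have hG : Measurable (Gfam Z) := measurable_Gfam hZmeas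
  have hN : Measurable (fun ω => (ε p ω, ε p' ω)) := (hεmeas p).prodMk (hεmeas p')
  have hind : IndepFun (fun ω => (ε p ω, ε p' ω)) (Gfam Z) P :=
    hindep.comp ((measurable_pi_apply p).prodMk (measurable_pi_apply p')) measurable_id
  have hφ : ∀ nm : ℕ × ℕ, Measurable (fun z => Ssum p ij nm.1 z * Ssum p' i'j' nm.2 z) :=
    fun nm => (measurable_Ssum p ij nm.1).mul (measurable_Ssum p' i'j' nm.2)
  have h0 : ∫⁻ ω, Ssum p ij (ε p ω) (Gfam Z ω) * Ssum p' i'j' (ε p' ω) (Gfam Z ω) ∂P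
      = ∫⁻ ω, (fun nm : ℕ × ℕ => fun z => Ssum p ij nm.1 z * Ssum p' i'j' nm.2 z)
          ((fun ω => (ε p ω, ε p' ω)) ω) (Gfam Z ω) ∂P := rfl
  rw [h0, lintegral_indep_discrete' P _ (Gfam Z) hN hG hind _ hφ]
  have h1 : ∫⁻ ω, (fun nm : ℕ × ℕ =>
        ∫⁻ ω', Ssum p ij nm.1 (Gfam Z ω') * Ssum p' i'j' nm.2 (Gfam Z ω') ∂P)
          ((fun ω => (ε p ω, ε p' ω)) ω) ∂P
      = ∫⁻ ω, (b * b') * ((ε p ω : ℝ≥0∞) * (ε p' ω : ℝ≥0∞)) ∂P := by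
    refine lintegral_congr fun ω => ?_
    show ∫⁻ ω', Ssum p ij (ε p ω) (Gfam Z ω') * Ssum p' i'j' (ε p' ω) (Gfam Z ω') ∂P = _
    rw [lintegral_Ssum_mul_cross P hZmeas hZ01 hZiid p p' hpp' ij i'j' b b' hb hb'
      (ε p ω) (ε p' ω)]
    ring
  rw [h1, lintegral_const_mul (f := fun ω => ((ε p ω : ℕ) : ℝ≥0∞) * ((ε p' ω : ℕ) : ℝ≥0∞))
    _ (Measurable.mul (f := fun ω => ((ε p ω : ℕ) : ℝ≥0∞)) (g := fun ω => ((ε p' ω : ℕ) : ℝ≥0∞))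
      (measurable_from_top.comp (hεmeas p)) (measurable_from_top.comp (hεmeas p')))]
  have hindε : IndepFun (fun ω => ((ε p ω : ℕ) : ℝ≥0∞)) (fun ω => ((ε p' ω : ℕ) : ℝ≥0∞)) P :=
    (hεiid.indepFun hpp').comp measurable_from_top measurable_from_top
  rw [lintegral_mul_eq_lintegral_mul_lintegral_of_indepFun''
    (f := fun ω => ((ε p ω : ℕ) : ℝ≥0∞)) (g := fun ω => ((ε p' ω : ℕ) : ℝ≥0∞))
    (measurable_from_top.comp (hεmeas p)).aemeasurable
    (measurable_from_top.comp (hεmeas p')).aemeasurable hindε]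
  ring


lemma lintegral_Ssum_mul_diag (hZmeas : ∀ p r, Measurable (Z p r))
    (hZ01 : ∀ p r ω ij, Z p r ω ij ≤ 1)
    (hZiid : iIndepFun (fun pr : (ℤ × ℤ) × ℕ => Z pr.1 pr.2) P)
    (p : ℤ × ℤ) (ij i'j' : ℕ × ℕ) (b b' c : ℝ≥0∞)
    (hb : ∀ r, P {ω | Z p r ω ij = 1} = b) (hb' : ∀ r, P {ω | Z p r ω i'j' = 1} = b')
    (hc : ∀ r, P {ω | Z p r ω ij = 1 ∧ Z p r ω i'j' = 1} = c) (n : ℕ) :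
    ∫⁻ ω, Ssum p ij n (Gfam Z ω) * Ssum p i'j' n (Gfam Z ω) ∂P
      = (n : ℝ≥0∞) * c + ((n * (n - 1) : ℕ) : ℝ≥0∞) * (b * b') := by
  classical
  have hpt : ∀ ω, Ssum p ij n (Gfam Z ω) * Ssum p i'j' n (Gfam Z ω)
      = ∑ r ∈ Finset.range n, ∑ r' ∈ Finset.range n,
          (Z p r ω ij : ℝ≥0∞) * (Z p r' ω i'j' : ℝ≥0∞) := by
    intro ω
    rw [Ssum, Ssum, Finset.sum_mul_sum]
    rfl
  simp only [hpt]
  rw [lintegral_finset_sum (f := fun (r : ℕ) ω => ∑ r' ∈ Finset.range n,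
      (Z p r ω ij : ℝ≥0∞) * (Z p r' ω i'j' : ℝ≥0∞)) _
    (fun r _ => Finset.measurable_sum _ fun r' _ =>
      Measurable.mul (f := fun ω => ((Z p r ω ij : ℕ) : ℝ≥0∞)) (g := fun ω => ((Z p r' ω i'j' : ℕ) : ℝ≥0∞))
      (measurable_from_top.comp (measurable_Zev hZmeas p r ij))
      (measurable_from_top.comp (measurable_Zev hZmeas p r' i'j')))]
  have hin : ∀ r ∈ Finset.range n,
      (∫⁻ ω, ∑ r' ∈ Finset.range n, (Z p r ω ij : ℝ≥0∞) * (Z p r' ω i'j' : ℝ≥0∞) ∂P)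
        = c + ((n - 1 : ℕ) : ℝ≥0∞) * (b * b') := by
    intro r hr
    rw [lintegral_finset_sum (f := fun (r' : ℕ) ω =>
        (Z p r ω ij : ℝ≥0∞) * (Z p r' ω i'j' : ℝ≥0∞)) _
      (fun r' _ => Measurable.mul (f := fun ω => ((Z p r ω ij : ℕ) : ℝ≥0∞)) (g := fun ω => ((Z p r' ω i'j' : ℕ) : ℝ≥0∞))
        (measurable_from_top.comp (measurable_Zev hZmeas p r ij))
        (measurable_from_top.comp (measurable_Zev hZmeas p r' i'j')))]
    have hval : ∀ r' ∈ Finset.range n,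
        (∫⁻ ω, (Z p r ω ij : ℝ≥0∞) * (Z p r' ω i'j' : ℝ≥0∞) ∂P)
          = if r' = r then c else b * b' := by
      intro r' _
      by_cases hrr : r' = r
      · subst hrr
        rw [if_pos rfl]
        have hcast : ∀ ω, (Z p r' ω ij : ℝ≥0∞) * (Z p r' ω i'j' : ℝ≥0∞)
            = ((Z p r' ω ij * Z p r' ω i'j' : ℕ) : ℝ≥0∞) := by
          intro ω; push_cast; ring
        simp only [hcast]
        rw [lintegral_nat_le_one P (fun ω => Z p r' ω ij * Z p r' ω i'j')
          ((measurable_Zev hZmeas p r' ij).mul (measurable_Zev hZmeas p r' i'j'))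
          (fun ω => le_trans (Nat.mul_le_mul (hZ01 p r' ω ij) (hZ01 p r' ω i'j'))
            (by norm_num))]
        have hset : {ω | Z p r' ω ij * Z p r' ω i'j' = 1}
            = {ω | Z p r' ω ij = 1 ∧ Z p r' ω i'j' = 1} := by
          ext ω
          simp only [Set.mem_setOf_eq]
          constructor
          · intro h
            exact ⟨Nat.eq_one_of_mul_eq_one_right h, Nat.eq_one_of_mul_eq_one_left h⟩
          · rintro ⟨h1, h2⟩
            rw [h1, h2]
        rw [hset, hc r']
      · simp only [if_neg hrr]
        have hne : ((p, r) : (ℤ × ℤ) × ℕ) ≠ (p, r') :=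
          fun h => hrr (congrArg Prod.snd h).symm
        have hindZ : IndepFun (fun ω => (Z p r ω ij : ℝ≥0∞))
            (fun ω => (Z p r' ω i'j' : ℝ≥0∞)) P := by
          have h0 := hZiid.indepFun hne
          exact h0.comp
            (measurable_from_top.comp (measurable_pi_apply ij))
            (measurable_from_top.comp (measurable_pi_apply i'j'))
        rw [lintegral_mul_eq_lintegral_mul_lintegral_of_indepFun''
          (f := fun ω => ((Z p r ω ij : ℕ) : ℝ≥0∞)) (g := fun ω => ((Z p r' ω i'j' : ℕ) : ℝ≥0∞))
          (measurable_from_top.comp (measurable_Zev hZmeas p r ij)).aemeasurable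
          (measurable_from_top.comp (measurable_Zev hZmeas p r' i'j')).aemeasurable hindZ,
          lintegral_Zev P hZmeas hZ01 p r ij, lintegral_Zev P hZmeas hZ01 p r' i'j',
          hb r, hb' r']
    rw [Finset.sum_congr rfl hval, ← Finset.add_sum_erase _ _ hr, if_pos rfl]
    have herase : ∀ r' ∈ (Finset.range n).erase r,
        (if r' = r then c else b * b') = b * b' := by
      intro r' hr'
      rw [if_neg (Finset.ne_of_mem_erase hr')]
    rw [Finset.sum_congr rfl herase, Finset.sum_const, Finset.card_erase_of_mem hr,
      Finset.card_range, nsmul_eq_mul]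
  rw [Finset.sum_congr rfl hin, Finset.sum_const, Finset.card_range, nsmul_eq_mul]
  push_cast [Nat.cast_mul]
  ring

lemma key_diag {ε : ℤ × ℤ → Ω → ℕ} (hεmeas : ∀ p, Measurable (ε p))
    (hZmeas : ∀ p r, Measurable (Z p r)) (hZ01 : ∀ p r ω ij, Z p r ω ij ≤ 1)
    (hZiid : iIndepFun (fun pr : (ℤ × ℤ) × ℕ => Z pr.1 pr.2) P)
    (hindep : IndepFun (fun ω p => ε p ω) (fun ω (pr : (ℤ × ℤ) × ℕ) => Z pr.1 pr.2 ω) P)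
    (p : ℤ × ℤ) (ij i'j' : ℕ × ℕ) (b b' c : ℝ≥0∞)
    (hb : ∀ r, P {ω | Z p r ω ij = 1} = b) (hb' : ∀ r, P {ω | Z p r ω i'j' = 1} = b')
    (hc : ∀ r, P {ω | Z p r ω ij = 1 ∧ Z p r ω i'j' = 1} = c) :
    ∫⁻ ω, Ssum p ij (ε p ω) (Gfam Z ω) * Ssum p i'j' (ε p ω) (Gfam Z ω) ∂P
      = c * ∫⁻ ω, (ε p ω : ℝ≥0∞) ∂P
        + (b * b') * ∫⁻ ω, ((ε p ω * (ε p ω - 1) : ℕ) : ℝ≥0∞) ∂P := by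
  have hN : Measurable (ε p) := hεmeas p
  have hG : Measurable (Gfam Z) := measurable_Gfam hZmeas
  have hind : IndepFun (ε p) (Gfam Z) P :=
    hindep.comp (measurable_pi_apply p) measurable_id
  have hφ : ∀ n : ℕ, Measurable (fun z => Ssum p ij n z * Ssum p i'j' n z) :=
    fun n => (measurable_Ssum p ij n).mul (measurable_Ssum p i'j' n)
  rw [lintegral_indep_discrete' P (ε p) (Gfam Z) hN hG hind
    (fun n z => Ssum p ij n z * Ssum p i'j' n z) hφ]
  have h1 : ∫⁻ ω, (fun n : ℕ =>
        ∫⁻ ω', Ssum p ij n (Gfam Z ω') * Ssum p i'j' n (Gfam Z ω') ∂P) (ε p ω) ∂P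
      = ∫⁻ ω, ((ε p ω : ℝ≥0∞) * c
          + ((ε p ω * (ε p ω - 1) : ℕ) : ℝ≥0∞) * (b * b')) ∂P := by
    refine lintegral_congr fun ω => ?_
    exact lintegral_Ssum_mul_diag P hZmeas hZ01 hZiid p ij i'j' b b' c hb hb' hc (ε p ω)
  rw [h1, lintegral_add_left (f := fun ω => ((ε p ω : ℕ) : ℝ≥0∞) * c)
      ((measurable_from_top.comp hN).mul_const c),
    lintegral_mul_const (f := fun ω => ((ε p ω : ℕ) : ℝ≥0∞)) c (measurable_from_top.comp hN),
    lintegral_mul_const (f := fun ω => ((ε p ω * (ε p ω - 1) : ℕ) : ℝ≥0∞)) (b * b')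
      ((measurable_from_top (f := fun n : ℕ => ((n * (n - 1) : ℕ) : ℝ≥0∞))).comp hN)]
  ring

end INMAaux

/-- Theorem 1(ii): the autocovariance function of the INMA(q1,q2) random field. -/
theorem inma_autocovariance
    {Ω : Type*} [MeasurableSpace Ω] (P : Measure Ω) [IsProbabilityMeasure P]
    (q1 q2 : ℕ) (hq : 1 ≤ q1 + q2)
    (β : ℕ → ℕ → ℝ)
    (hβ : ∀ i ≤ q1, ∀ j ≤ q2, β i j ∈ Set.Icc (0 : ℝ) 1)
    -- the i.i.d. innovations, with finite mean and variance
    (ε : ℤ × ℤ → Ω → ℕ) (hεmeas : ∀ p, Measurable (ε p))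
    (hεiid : iIndepFun ε P)
    (hεid : ∀ p, Measure.map (ε p) P = Measure.map (ε (0, 0)) P)
    (hεL2 : Integrable (fun ω => ((ε (0, 0) ω : ℝ)) ^ 2) P)
    (με : ℝ) (hμε : με = ∫ ω, (ε (0, 0) ω : ℝ) ∂P)
    (σε2 : ℝ) (hσε2 : σε2 = variance (fun ω => (ε (0, 0) ω : ℝ)) P)
    -- the counting-series vectors, i.i.d., with {0,1}-valued components
    (Z : ℤ × ℤ → ℕ → Ω → ℕ × ℕ → ℕ)
    (hZmeas : ∀ p r, Measurable (Z p r))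
    (hZ01 : ∀ p r ω ij, Z p r ω ij ≤ 1)
    (hZiid : iIndepFun
      (fun pr : (ℤ × ℤ) × ℕ => Z pr.1 pr.2) P)
    (hZid : ∀ p r, Measure.map (Z p r) P = Measure.map (Z (0, 0) 0) P)
    (hZβ : ∀ p r, ∀ i ≤ q1, ∀ j ≤ q2,
      P {ω | Z p r ω (i, j) = 1} = ENNReal.ofReal (β i j))
    -- the whole thinning family is independent of the innovation family
    (hindep : IndepFun (fun ω p => ε p ω)
      (fun ω (pr : (ℤ × ℤ) × ℕ) => Z pr.1 pr.2 ω) P)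
    -- the INMA(q1,q2) random field
    (X : ℤ → ℤ → Ω → ℕ)
    (hX : ∀ s t ω, X s t ω =
      ∑ i ∈ range (q1 + 1), ∑ j ∈ range (q2 + 1),
        ∑ r ∈ range (ε (s - (i : ℤ), t - (j : ℤ)) ω),
          Z (s - (i : ℤ), t - (j : ℤ)) r ω (i, j))
    (s t : ℤ) (k l : ℕ) (hk : k ≤ q1) (hl : l ≤ q2) :
    (∫ ω, (X s t ω : ℝ) * (X (s - (k : ℤ)) (t - (l : ℤ)) ω : ℝ) ∂P)
      - (∫ ω, (X s t ω : ℝ) ∂P) * (∫ ω, (X (s - (k : ℤ)) (t - (l : ℤ)) ω : ℝ) ∂P) =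
      (σε2 - με) * (∑ i ∈ Icc k q1, ∑ j ∈ Icc l q2, β i j * β (i - k) (j - l))
      + με * ∑ i ∈ Icc k q1, ∑ j ∈ Icc l q2,
          (P {ω | Z (s - (i : ℤ), t - (j : ℤ)) 0 ω (i, j) = 1 ∧
                   Z (s - (i : ℤ), t - (j : ℤ)) 0 ω (i - k, j - l) = 1}).toReal := by
  classical
  -- notation
  set Q : Finset (ℕ × ℕ) := (range (q1 + 1)) ×ˢ (range (q2 + 1)) with hQ
  set site : ℕ × ℕ → ℤ × ℤ := fun q => (s - (q.1 : ℤ), t - (q.2 : ℤ)) with hsite_def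
  set site' : ℕ × ℕ → ℤ × ℤ :=
    fun q => (s - (k : ℤ) - (q.1 : ℤ), t - (l : ℤ) - (q.2 : ℤ)) with hsite'_def
  set T : ℕ × ℕ → Ω → ℝ≥0∞ :=
    fun q ω => Ssum (site q) q (ε (site q) ω) (Gfam Z ω) with hT_def
  set T' : ℕ × ℕ → Ω → ℝ≥0∞ :=
    fun q ω => Ssum (site' q) q (ε (site' q) ω) (Gfam Z ω) with hT'_def
  -- membership facts
  have hmemQ : ∀ q ∈ Q, q.1 ≤ q1 ∧ q.2 ≤ q2 := by
    intro q hq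
    rw [hQ, Finset.mem_product, Finset.mem_range, Finset.mem_range] at hq
    omega
  -- casts of the fields
  have hXcast : ∀ ω, ((X s t ω : ℝ≥0∞)) = ∑ q ∈ Q, T q ω := by
    intro ω
    rw [hX s t ω, Finset.sum_product]
    push_cast
    rfl
  have hX'cast : ∀ ω, ((X (s - (k : ℤ)) (t - (l : ℤ)) ω : ℝ≥0∞)) = ∑ q ∈ Q, T' q ω := by
    intro ω
    rw [hX (s - (k : ℤ)) (t - (l : ℤ)) ω, Finset.sum_product]
    push_cast
    rfl
  -- measurability
  have hTmeas : ∀ q, Measurable (T q) := fun q => measurable_T hεmeas hZmeas (site q) (site q) q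
  have hT'meas : ∀ q, Measurable (T' q) :=
    fun q => measurable_T hεmeas hZmeas (site' q) (site' q) q
  have hXE : Measurable (fun ω => (X s t ω : ℝ≥0∞)) := by
    have : (fun ω => (X s t ω : ℝ≥0∞)) = fun ω => ∑ q ∈ Q, T q ω := funext hXcast
    rw [this]; exact Finset.measurable_sum _ fun q _ => hTmeas q
  have hX'E : Measurable (fun ω => (X (s - (k : ℤ)) (t - (l : ℤ)) ω : ℝ≥0∞)) := by
    have : (fun ω => (X (s - (k : ℤ)) (t - (l : ℤ)) ω : ℝ≥0∞)) = fun ω => ∑ q ∈ Q, T' q ω :=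
      funext hX'cast
    rw [this]; exact Finset.measurable_sum _ fun q _ => hT'meas q
  -- probability values
  set b : ℕ × ℕ → ℝ≥0∞ := fun q => ENNReal.ofReal (β q.1 q.2) with hb_def
  have hbQ : ∀ q ∈ Q, ∀ (p : ℤ × ℤ) (r : ℕ), P {ω | Z p r ω q = 1} = b q := by
    intro q hq p r
    obtain ⟨h1, h2⟩ := hmemQ q hq
    have := hZβ p r q.1 h1 q.2 h2
    simpa using this
  set C : ℕ × ℕ → ℝ≥0∞ := fun q =>
    P {ω | Z (s - (q.1 : ℤ), t - (q.2 : ℤ)) 0 ω (q.1, q.2) = 1 ∧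
        Z (s - (q.1 : ℤ), t - (q.2 : ℤ)) 0 ω (q.1 - k, q.2 - l) = 1} with hC_def
  have hZsame : ∀ (p : ℤ × ℤ) (r : ℕ) (A : Set (ℕ × ℕ → ℕ)), MeasurableSet A →
      P (Z p r ⁻¹' A) = P (Z p 0 ⁻¹' A) := by
    intro p r A hA
    rw [← Measure.map_apply (hZmeas p r) hA, hZid p r, ← hZid p 0,
      Measure.map_apply (hZmeas p 0) hA]
  have hCr : ∀ q : ℕ × ℕ, ∀ r : ℕ,
      P {ω | Z (site q) r ω q = 1 ∧ Z (site q) r ω (q.1 - k, q.2 - l) = 1} = C q := by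
    intro q r
    have hA : MeasurableSet {v : ℕ × ℕ → ℕ | v q = 1 ∧ v (q.1 - k, q.2 - l) = 1} :=
      ((measurable_pi_apply q) (measurableSet_singleton 1)).inter
        ((measurable_pi_apply (q.1 - k, q.2 - l)) (measurableSet_singleton 1))
    have h := hZsame (site q) r _ hA
    have h2 : P {ω | Z (site q) r ω q = 1 ∧ Z (site q) r ω (q.1 - k, q.2 - l) = 1}
        = P {ω | Z (site q) 0 ω q = 1 ∧ Z (site q) 0 ω (q.1 - k, q.2 - l) = 1} := h
    rw [h2]
  -- innovation moments (lintegral form)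
  set Eε : ℝ≥0∞ := ∫⁻ ω, (ε (0, 0) ω : ℝ≥0∞) ∂P with hEε_def
  set E2 : ℝ≥0∞ := ∫⁻ ω, ((ε (0, 0) ω * (ε (0, 0) ω - 1) : ℕ) : ℝ≥0∞) ∂P with hE2_def
  have hEp : ∀ p, ∫⁻ ω, (ε p ω : ℝ≥0∞) ∂P = Eε := by
    intro p
    calc ∫⁻ ω, (ε p ω : ℝ≥0∞) ∂P
        = ∫⁻ n, ((n : ℕ) : ℝ≥0∞) ∂(P.map (ε p)) :=
          (lintegral_map (f := fun n : ℕ => ((n : ℕ) : ℝ≥0∞)) measurable_from_top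
            (hεmeas p)).symm
      _ = ∫⁻ n, ((n : ℕ) : ℝ≥0∞) ∂(P.map (ε (0, 0))) := by rw [hεid p]
      _ = Eε := lintegral_map measurable_from_top (hεmeas (0, 0))
  have hE2p : ∀ p, ∫⁻ ω, ((ε p ω * (ε p ω - 1) : ℕ) : ℝ≥0∞) ∂P = E2 := by
    intro p
    calc ∫⁻ ω, ((ε p ω * (ε p ω - 1) : ℕ) : ℝ≥0∞) ∂P
        = ∫⁻ n, ((n * (n - 1) : ℕ) : ℝ≥0∞) ∂(P.map (ε p)) :=
          (lintegral_map (f := fun n : ℕ => ((n * (n - 1) : ℕ) : ℝ≥0∞)) measurable_from_top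
            (hεmeas p)).symm
      _ = ∫⁻ n, ((n * (n - 1) : ℕ) : ℝ≥0∞) ∂(P.map (ε (0, 0))) := by rw [hεid p]
      _ = E2 := lintegral_map measurable_from_top (hεmeas (0, 0))
  -- per-term lintegrals
  have hmean : ∀ q ∈ Q, ∫⁻ ω, T q ω ∂P = b q * Eε := by
    intro q hq
    simp only [hT_def]
    rw [key_mean P hεmeas hZmeas hZ01 hindep (site q) q (b q) (fun r => hbQ q hq (site q) r),
      hEp (site q)]
  have hmean' : ∀ q ∈ Q, ∫⁻ ω, T' q ω ∂P = b q * Eε := by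
    intro q hq
    simp only [hT'_def]
    rw [key_mean P hεmeas hZmeas hZ01 hindep (site' q) q (b q) (fun r => hbQ q hq (site' q) r),
      hEp (site' q)]
  have hI : ∀ q ∈ Q, ∀ q' ∈ Q, ∫⁻ ω, T q ω * T' q' ω ∂P
      = if q.1 = q'.1 + k ∧ q.2 = q'.2 + l then C q * Eε + (b q * b q') * E2
        else (b q * Eε) * (b q' * Eε) := by
    intro q hq q' hq'
    by_cases hcase : q.1 = q'.1 + k ∧ q.2 = q'.2 + l
    · rw [if_pos hcase]
      have hsite : site' q' = site q := by
        simp only [hsite_def, hsite'_def]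
        obtain ⟨h1, h2⟩ := hcase
        have e1 : s - (k : ℤ) - (q'.1 : ℤ) = s - (q.1 : ℤ) := by omega
        have e2 : t - (l : ℤ) - (q'.2 : ℤ) = t - (q.2 : ℤ) := by omega
        rw [Prod.mk.injEq]
        exact ⟨e1, e2⟩
      have hq'eq : q' = (q.1 - k, q.2 - l) := by
        obtain ⟨h1, h2⟩ := hcase
        exact Prod.ext (by omega) (by omega)
      have hcq : ∀ r, P {ω | Z (site q) r ω q = 1 ∧ Z (site q) r ω q' = 1} = C q := by
        intro r
        rw [hq'eq]
        exact hCr q r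
      have he : ∫⁻ ω, T q ω * T' q' ω ∂P
          = ∫⁻ ω, Ssum (site q) q (ε (site q) ω) (Gfam Z ω)
              * Ssum (site q) q' (ε (site q) ω) (Gfam Z ω) ∂P := by
        refine lintegral_congr fun ω => ?_
        simp only [hT_def, hT'_def, hsite]
      rw [he, key_diag P hεmeas hZmeas hZ01 hZiid hindep (site q) q q' (b q) (b q') (C q)
        (fun r => hbQ q hq (site q) r) (fun r => hbQ q' hq' (site q) r) hcq,
        hEp (site q), hE2p (site q)]
    · rw [if_neg hcase]
      have hsite : site q ≠ site' q' := by
        simp only [hsite_def, hsite'_def]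
        intro h
        obtain ⟨h1, h2⟩ := Prod.ext_iff.mp h
        simp only at h1 h2
        exact hcase ⟨by omega, by omega⟩
      simp only [hT_def, hT'_def]
      rw [key_cross P hεmeas hεiid hZmeas hZ01 hZiid hindep (site q) (site' q') hsite q q'
        (b q) (b q') (fun r => hbQ q hq (site q) r) (fun r => hbQ q' hq' (site' q') r),
        hEp (site q), hEp (site' q')]
  -- lintegral totals
  have hLX : ∫⁻ ω, (X s t ω : ℝ≥0∞) ∂P = ∑ q ∈ Q, b q * Eε := by
    have h0 : (fun ω => (X s t ω : ℝ≥0∞)) = fun ω => ∑ q ∈ Q, T q ω := funext hXcast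
    rw [h0, lintegral_finset_sum _ fun q _ => hTmeas q]
    exact Finset.sum_congr rfl hmean
  have hLX' : ∫⁻ ω, (X (s - (k : ℤ)) (t - (l : ℤ)) ω : ℝ≥0∞) ∂P = ∑ q ∈ Q, b q * Eε := by
    have h0 : (fun ω => (X (s - (k : ℤ)) (t - (l : ℤ)) ω : ℝ≥0∞)) = fun ω => ∑ q ∈ Q, T' q ω :=
      funext hX'cast
    rw [h0, lintegral_finset_sum _ fun q _ => hT'meas q]
    exact Finset.sum_congr rfl hmean'
  have hLXX : ∫⁻ ω, (X s t ω : ℝ≥0∞) * (X (s - (k : ℤ)) (t - (l : ℤ)) ω : ℝ≥0∞) ∂P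
      = ∑ q ∈ Q, ∑ q' ∈ Q,
          (if q.1 = q'.1 + k ∧ q.2 = q'.2 + l then C q * Eε + (b q * b q') * E2
            else (b q * Eε) * (b q' * Eε)) := by
    have hpt : ∀ ω, (X s t ω : ℝ≥0∞) * (X (s - (k : ℤ)) (t - (l : ℤ)) ω : ℝ≥0∞)
        = ∑ q ∈ Q, ∑ q' ∈ Q, T q ω * T' q' ω := by
      intro ω
      rw [hXcast ω, hX'cast ω, Finset.sum_mul_sum]
    simp only [hpt]
    rw [lintegral_finset_sum (f := fun q ω => ∑ q' ∈ Q, T q ω * T' q' ω) _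
      (fun q _ => Finset.measurable_sum _ fun q' _ => (hTmeas q).mul (hT'meas q'))]
    refine Finset.sum_congr rfl fun q hq => ?_
    rw [lintegral_finset_sum (f := fun q' ω => T q ω * T' q' ω) _
      (fun q' _ => (hTmeas q).mul (hT'meas q'))]
    exact Finset.sum_congr rfl fun q' hq' => hI q hq q' hq'
  -- real moments
  have hεsm : AEStronglyMeasurable (fun ω => (ε (0, 0) ω : ℝ)) P :=
    (measurable_from_top.comp (hεmeas (0, 0)) :
      Measurable fun ω => (ε (0, 0) ω : ℝ)).aestronglyMeasurable
  have hεint : Integrable (fun ω => (ε (0, 0) ω : ℝ)) P := by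
    refine (hεL2.add (integrable_const 1)).mono hεsm (ae_of_all _ fun ω => ?_)
    simp only [Pi.add_apply]
    have h0 : (0:ℝ) ≤ (ε (0, 0) ω : ℝ) := Nat.cast_nonneg _
    rw [Real.norm_eq_abs, Real.norm_eq_abs, abs_of_nonneg h0, abs_of_nonneg (by positivity)]
    nlinarith [sq_nonneg ((ε (0, 0) ω : ℝ) - 1)]
  have hμnn : 0 ≤ με := by rw [hμε]; exact integral_nonneg fun ω => Nat.cast_nonneg _
  have hEεval : Eε = ENNReal.ofReal με := by
    have h1 : ∫⁻ ω, ((ε (0, 0) ω : ℕ) : ℝ≥0∞) ∂P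
        = ∫⁻ ω, ENNReal.ofReal ((ε (0, 0) ω : ℝ)) ∂P :=
      lintegral_congr fun ω => (ENNReal.ofReal_natCast _).symm
    rw [hEε_def, h1, ← ofReal_integral_eq_lintegral_ofReal hεint
      (ae_of_all _ fun ω => Nat.cast_nonneg _), hμε]
  set μ2 : ℝ := ∫ ω, (ε (0, 0) ω : ℝ) ^ 2 ∂P with hμ2_def
  have hnatid : ∀ n : ℕ, ((n * (n - 1) : ℕ) : ℝ) = (n : ℝ) ^ 2 - (n : ℝ) := by
    intro n
    cases n with
    | zero => simp
    | succ m => push_cast [Nat.succ_sub_one]; ring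
  have hfnn : ∀ ω, 0 ≤ (ε (0, 0) ω : ℝ) ^ 2 - (ε (0, 0) ω : ℝ) := fun ω => by
    rw [← hnatid]; exact Nat.cast_nonneg _
  have hfint : Integrable (fun ω => (ε (0, 0) ω : ℝ) ^ 2 - (ε (0, 0) ω : ℝ)) P :=
    hεL2.sub hεint
  have hE2val : E2 = ENNReal.ofReal (μ2 - με) := by
    have h1 : ∀ ω, ((ε (0, 0) ω * (ε (0, 0) ω - 1) : ℕ) : ℝ≥0∞)
        = ENNReal.ofReal ((ε (0, 0) ω : ℝ) ^ 2 - (ε (0, 0) ω : ℝ)) := fun ω => by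
      rw [← ENNReal.ofReal_natCast, hnatid]
    rw [hE2_def, lintegral_congr h1, ← ofReal_integral_eq_lintegral_ofReal hfint
      (ae_of_all _ hfnn), integral_sub hεL2 hεint, ← hμε, ← hμ2_def]
  have hμ2sub : 0 ≤ μ2 - με := by
    rw [hμ2_def, hμε, ← integral_sub hεL2 hεint]
    exact integral_nonneg hfnn
  have hmem2 : MemLp (fun ω => (ε (0, 0) ω : ℝ)) 2 P :=
    (memLp_two_iff_integrable_sq hεsm).mpr hεL2
  have hvar : σε2 = μ2 - με ^ 2 := by
    rw [hσε2, variance_eq_sub hmem2]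
    simp only [Pi.pow_apply]
    rw [hμ2_def, hμε]
  -- finiteness
  have hbfin : ∀ q, b q ≠ ⊤ := fun q => ENNReal.ofReal_ne_top
  have hEεfin : Eε ≠ ⊤ := by rw [hEεval]; exact ENNReal.ofReal_ne_top
  have hE2fin : E2 ≠ ⊤ := by rw [hE2val]; exact ENNReal.ofReal_ne_top
  have hCfin : ∀ q : ℕ × ℕ, C q ≠ ⊤ := fun q => measure_ne_top P _
  have hitefin : ∀ q q' : ℕ × ℕ,
      (if q.1 = q'.1 + k ∧ q.2 = q'.2 + l then C q * Eε + (b q * b q') * E2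
        else (b q * Eε) * (b q' * Eε)) ≠ ⊤ := by
    intro q q'
    split_ifs
    · exact ENNReal.add_ne_top.mpr ⟨ENNReal.mul_ne_top (hCfin q) hEεfin,
        ENNReal.mul_ne_top (ENNReal.mul_ne_top (hbfin q) (hbfin q')) hE2fin⟩
    · exact ENNReal.mul_ne_top (ENNReal.mul_ne_top (hbfin q) hEεfin)
        (ENNReal.mul_ne_top (hbfin q') hEεfin)
  have hβval : ∀ q ∈ Q, (b q).toReal = β q.1 q.2 := fun q hq =>
    ENNReal.toReal_ofReal (hβ q.1 (hmemQ q hq).1 q.2 (hmemQ q hq).2).1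
  -- the three Bochner integrals
  have hXsm : AEStronglyMeasurable (fun ω => (X s t ω : ℝ)) P := by
    have he : (fun ω => (X s t ω : ℝ)) = fun ω => ((X s t ω : ℝ≥0∞)).toReal := by
      funext ω; simp
    rw [he]; exact (ENNReal.measurable_toReal.comp hXE).aestronglyMeasurable
  have hX'sm : AEStronglyMeasurable (fun ω => (X (s - (k : ℤ)) (t - (l : ℤ)) ω : ℝ)) P := by
    have he : (fun ω => (X (s - (k : ℤ)) (t - (l : ℤ)) ω : ℝ))
        = fun ω => ((X (s - (k : ℤ)) (t - (l : ℤ)) ω : ℝ≥0∞)).toReal := by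
      funext ω; simp
    rw [he]; exact (ENNReal.measurable_toReal.comp hX'E).aestronglyMeasurable
  have hIX : ∫ ω, (X s t ω : ℝ) ∂P = ∑ q ∈ Q, β q.1 q.2 * με := by
    rw [integral_eq_lintegral_of_nonneg_ae (ae_of_all _ fun ω => Nat.cast_nonneg _) hXsm]
    have h1 : ∫⁻ ω, ENNReal.ofReal ((X s t ω : ℝ)) ∂P = ∑ q ∈ Q, b q * Eε := by
      rw [← hLX]; exact lintegral_congr fun ω => by rw [ENNReal.ofReal_natCast]
    rw [h1, ENNReal.toReal_sum (fun q _ => ENNReal.mul_ne_top (hbfin q) hEεfin)]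
    refine Finset.sum_congr rfl fun q hq => ?_
    rw [ENNReal.toReal_mul, hβval q hq, hEεval, ENNReal.toReal_ofReal hμnn]
  have hIX' : ∫ ω, (X (s - (k : ℤ)) (t - (l : ℤ)) ω : ℝ) ∂P = ∑ q ∈ Q, β q.1 q.2 * με := by
    rw [integral_eq_lintegral_of_nonneg_ae (ae_of_all _ fun ω => Nat.cast_nonneg _) hX'sm]
    have h1 : ∫⁻ ω, ENNReal.ofReal ((X (s - (k : ℤ)) (t - (l : ℤ)) ω : ℝ)) ∂P
        = ∑ q ∈ Q, b q * Eε := by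
      rw [← hLX']; exact lintegral_congr fun ω => by rw [ENNReal.ofReal_natCast]
    rw [h1, ENNReal.toReal_sum (fun q _ => ENNReal.mul_ne_top (hbfin q) hEεfin)]
    refine Finset.sum_congr rfl fun q hq => ?_
    rw [ENNReal.toReal_mul, hβval q hq, hEεval, ENNReal.toReal_ofReal hμnn]
  have hprodsm : AEStronglyMeasurable
      (fun ω => (X s t ω : ℝ) * (X (s - (k : ℤ)) (t - (l : ℤ)) ω : ℝ)) P := by
    have he : (fun ω => (X s t ω : ℝ) * (X (s - (k : ℤ)) (t - (l : ℤ)) ω : ℝ))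
        = fun ω => (((X s t ω : ℝ≥0∞)) * ((X (s - (k : ℤ)) (t - (l : ℤ)) ω : ℝ≥0∞))).toReal := by
      funext ω; rw [ENNReal.toReal_mul]; simp
    rw [he]; exact (ENNReal.measurable_toReal.comp (hXE.mul hX'E)).aestronglyMeasurable
  have hIXX : ∫ ω, (X s t ω : ℝ) * (X (s - (k : ℤ)) (t - (l : ℤ)) ω : ℝ) ∂P
      = ∑ q ∈ Q, ∑ q' ∈ Q,
          (if q.1 = q'.1 + k ∧ q.2 = q'.2 + l
            then με * (C q).toReal + (μ2 - με) * (β q.1 q.2 * β q'.1 q'.2)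
            else (β q.1 q.2 * με) * (β q'.1 q'.2 * με)) := by
    rw [integral_eq_lintegral_of_nonneg_ae
      (ae_of_all _ fun ω => mul_nonneg (Nat.cast_nonneg _) (Nat.cast_nonneg _)) hprodsm]
    have h1 : ∫⁻ ω, ENNReal.ofReal
          ((X s t ω : ℝ) * (X (s - (k : ℤ)) (t - (l : ℤ)) ω : ℝ)) ∂P
        = ∑ q ∈ Q, ∑ q' ∈ Q,
            (if q.1 = q'.1 + k ∧ q.2 = q'.2 + l then C q * Eε + (b q * b q') * E2
              else (b q * Eε) * (b q' * Eε)) := by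
      rw [← hLXX]
      exact lintegral_congr fun ω => by
        rw [ENNReal.ofReal_mul (Nat.cast_nonneg _), ENNReal.ofReal_natCast,
          ENNReal.ofReal_natCast]
    rw [h1, ENNReal.toReal_sum (fun q _ =>
      ENNReal.sum_ne_top.mpr fun q' _ => hitefin q q')]
    refine Finset.sum_congr rfl fun q hq => ?_
    rw [ENNReal.toReal_sum (fun q' _ => hitefin q q')]
    refine Finset.sum_congr rfl fun q' hq' => ?_
    split_ifs with h
    · rw [ENNReal.toReal_add (ENNReal.mul_ne_top (hCfin q) hEεfin)
        (ENNReal.mul_ne_top (ENNReal.mul_ne_top (hbfin q) (hbfin q')) hE2fin),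
        ENNReal.toReal_mul, ENNReal.toReal_mul, ENNReal.toReal_mul,
        hEεval, hE2val, ENNReal.toReal_ofReal hμnn, ENNReal.toReal_ofReal hμ2sub,
        hβval q hq, hβval q' hq']
      ring
    · rw [ENNReal.toReal_mul, ENNReal.toReal_mul, ENNReal.toReal_mul,
        hEεval, ENNReal.toReal_ofReal hμnn, hβval q hq, hβval q' hq']
  -- assemble the covariance
  set v : ℕ × ℕ → ℝ := fun q =>
    με * (C q).toReal + (σε2 - με) * (β q.1 q.2 * β (q.1 - k) (q.2 - l)) with hv_def
  rw [hIXX, hIX, hIX', Finset.sum_mul_sum, ← Finset.sum_sub_distrib]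
  have hstep1 : ∀ q ∈ Q,
      (∑ q' ∈ Q, (if q.1 = q'.1 + k ∧ q.2 = q'.2 + l
          then με * (C q).toReal + (μ2 - με) * (β q.1 q.2 * β q'.1 q'.2)
          else (β q.1 q.2 * με) * (β q'.1 q'.2 * με)))
        - (∑ q' ∈ Q, β q.1 q.2 * με * (β q'.1 q'.2 * με))
      = ∑ q' ∈ Q, (if q.1 = q'.1 + k ∧ q.2 = q'.2 + l then v q else 0) := by
    intro q hq
    rw [← Finset.sum_sub_distrib]
    refine Finset.sum_congr rfl fun q' hq' => ?_
    split_ifs with h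
    · have e1 : q'.1 = q.1 - k := by omega
      have e2 : q'.2 = q.2 - l := by omega
      rw [hv_def]
      simp only
      rw [e1, e2, hvar]
      ring
    · ring
  rw [Finset.sum_congr rfl hstep1]
  have hstep2 : ∀ q ∈ Q,
      (∑ q' ∈ Q, (if q.1 = q'.1 + k ∧ q.2 = q'.2 + l then v q else 0))
        = if k ≤ q.1 ∧ l ≤ q.2 then v q else 0 := by
    intro q hq
    by_cases hkl : k ≤ q.1 ∧ l ≤ q.2
    · rw [if_pos hkl]
      have hmem : (q.1 - k, q.2 - l) ∈ Q := by
        obtain ⟨h1, h2⟩ := hmemQ q hq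
        rw [hQ, Finset.mem_product, Finset.mem_range, Finset.mem_range]
        constructor <;> omega
      rw [Finset.sum_eq_single_of_mem (q.1 - k, q.2 - l) hmem ?h0]
      · rw [if_pos ⟨by simp; omega, by simp; omega⟩]
      · intro q' _ hne
        rw [if_neg]
        intro hcond
        exact hne (Prod.ext (by omega) (by omega))
    · rw [if_neg hkl]
      refine Finset.sum_eq_zero fun q' _ => ?_
      rw [if_neg]
      intro hcond
      exact hkl ⟨by omega, by omega⟩
  rw [Finset.sum_congr rfl hstep2]
  have hstep3 : (∑ q ∈ Q, if k ≤ q.1 ∧ l ≤ q.2 then v q else 0)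
      = ∑ i ∈ Icc k q1, ∑ j ∈ Icc l q2, v (i, j) := by
    rw [← Finset.sum_filter]
    have hQf : Q.filter (fun q : ℕ × ℕ => k ≤ q.1 ∧ l ≤ q.2)
        = (Icc k q1) ×ˢ (Icc l q2) := by
      ext q
      rw [Finset.mem_filter, hQ, Finset.mem_product, Finset.mem_product,
        Finset.mem_range, Finset.mem_range, Finset.mem_Icc, Finset.mem_Icc]
      omega
    rw [hQf, Finset.sum_product]
  rw [hstep3]
  have hstep4 : ∀ i ∈ Icc k q1, ∑ j ∈ Icc l q2, v (i, j)
      = (σε2 - με) * (∑ j ∈ Icc l q2, β i j * β (i - k) (j - l))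
        + με * ∑ j ∈ Icc l q2, (C (i, j)).toReal := by
    intro i _
    rw [hv_def]
    simp only
    rw [Finset.sum_add_distrib, Finset.mul_sum, Finset.mul_sum]
    ring
  rw [Finset.sum_congr rfl hstep4, Finset.sum_add_distrib, ← Finset.mul_sum, ← Finset.mul_sum]
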